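/- Let χ_S > 0, χ_N > 0, D_S > 0, α > 0, ε > 0. Then there exists a unique σ ∈ (0, min(1/ε, (χ_S+χ_N))) ∩ (0, 1/ε) solving χ_N − σ/(1 − (εσ)²) = χ_S · σ/√(4 D_S α + σ²), i.e. the function F(σ) = χ_N − σ/(1−(εσ)²) − χ_S σ/√(4 D_S α + σ²) has exactly one zero on the interval (0, 1/ε). -/

import Mathlib

open Real

private lemma stmt3_mono (χS DS α ε : ℝ) (hS : 0 < χS) (hD : 0 < DS)
    (hα : 0 < α) (hε : 0 < ε) :
    ∀ a b : ℝ, 0 ≤ a → a < b → b < 1 / ε →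
      a / (1 - (ε * a) ^ 2) + χS * a / Real.sqrt (4 * DS * α + a ^ 2) <
      b / (1 - (ε * b) ^ 2) + χS * b / Real.sqrt (4 * DS * α + b ^ 2) := by
  have hcpos : (0:ℝ) < 4 * DS * α := by positivity
  intro a b ha hab hb
  have hb0 : 0 < b := lt_of_le_of_lt ha hab
  have hεb : b * ε < 1 := (lt_div_iff₀ hε).mp hb
  have hεa : a * ε < 1 := by nlinarith [mul_lt_mul_of_pos_right hab hε]
  have hBpos : 0 < 1 - (ε * b) ^ 2 := by
    nlinarith [mul_pos (show (0:ℝ) < 1 - ε * b by nlinarith)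
      (show (0:ℝ) < 1 + ε * b by nlinarith)]
  have hApos : 0 < 1 - (ε * a) ^ 2 := by
    nlinarith [mul_pos (show (0:ℝ) < 1 - ε * a by nlinarith)
      (show (0:ℝ) < 1 + ε * a by nlinarith)]
  have hBA : 1 - (ε * b) ^ 2 ≤ 1 - (ε * a) ^ 2 := by
    nlinarith [mul_self_le_mul_self (mul_nonneg hε.le ha)
      (show ε * a ≤ ε * b by nlinarith)]
  have h1 : a / (1 - (ε * a) ^ 2) < b / (1 - (ε * b) ^ 2) := by
    rw [div_lt_div_iff₀ hApos hBpos]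
    nlinarith
  have hsa : 0 < Real.sqrt (4 * DS * α + a ^ 2) := Real.sqrt_pos.mpr (by positivity)
  have hsb : 0 < Real.sqrt (4 * DS * α + b ^ 2) := Real.sqrt_pos.mpr (by positivity)
  have h2 : χS * a / Real.sqrt (4 * DS * α + a ^ 2)
      ≤ χS * b / Real.sqrt (4 * DS * α + b ^ 2) := by
    rw [div_le_div_iff₀ hsa hsb]
    have key : a * Real.sqrt (4 * DS * α + b ^ 2) ≤ b * Real.sqrt (4 * DS * α + a ^ 2) := by
      have ha2 : a * Real.sqrt (4 * DS * α + b ^ 2)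
          = Real.sqrt (a ^ 2 * (4 * DS * α + b ^ 2)) := by
        rw [Real.sqrt_mul (by positivity), Real.sqrt_sq ha]
      have hb2 : b * Real.sqrt (4 * DS * α + a ^ 2)
          = Real.sqrt (b ^ 2 * (4 * DS * α + a ^ 2)) := by
        rw [Real.sqrt_mul (by positivity), Real.sqrt_sq hb0.le]
      rw [ha2, hb2]
      apply Real.sqrt_le_sqrt
      have hab2 : a ^ 2 ≤ b ^ 2 := by nlinarith
      nlinarith [mul_le_mul_of_nonneg_right hab2 hcpos.le]
    calc χS * a * Real.sqrt (4 * DS * α + b ^ 2)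
        = χS * (a * Real.sqrt (4 * DS * α + b ^ 2)) := by ring
      _ ≤ χS * (b * Real.sqrt (4 * DS * α + a ^ 2)) := by
          exact mul_le_mul_of_nonneg_left key hS.le
      _ = χS * b * Real.sqrt (4 * DS * α + a ^ 2) := by ring
  linarith

private lemma stmt3_pt (χS χN DS α ε : ℝ) (hS : 0 < χS) (hN : 0 < χN) (hD : 0 < DS)
    (hα : 0 < α) (hε : 0 < ε) :
    ∃ b : ℝ, 0 < b ∧ b < 1 / ε ∧
      χN < b / (1 - (ε * b) ^ 2) + χS * b / Real.sqrt (4 * DS * α + b ^ 2) := by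
  obtain ⟨δ, hδpos, hδ1, hδ2⟩ : ∃ δ : ℝ, 0 < δ ∧ δ ≤ 1 / (2 * ε) ∧
      δ ≤ 1 / (8 * ε ^ 2 * χN) :=
    ⟨min (1 / (2 * ε)) (1 / (8 * ε ^ 2 * χN)), lt_min (by positivity) (by positivity),
      min_le_left _ _, min_le_right _ _⟩
  have hhalf : 1 / (2 * ε) < 1 / ε := by
    rw [div_lt_div_iff₀ (by positivity) hε]; nlinarith
  refine ⟨1 / ε - δ, by linarith, by linarith, ?_⟩
  set b := 1 / ε - δ with hbdef
  have hbpos : 0 < b := by simp only [hbdef]; linarith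
  have hεb : ε * b = 1 - ε * δ := by
    rw [hbdef, mul_sub, mul_one_div_cancel hε.ne']
  have hεδ : ε * δ ≤ 1 / 2 := by
    have := mul_le_mul_of_nonneg_left hδ1 hε.le
    calc ε * δ ≤ ε * (1 / (2 * ε)) := this
      _ = 1 / 2 := by field_simp
  have hεδpos : 0 < ε * δ := mul_pos hε hδpos
  have hden : 1 - (ε * b) ^ 2 = ε * δ * (2 - ε * δ) := by rw [hεb]; ring
  have hdenpos : 0 < 1 - (ε * b) ^ 2 := by rw [hden]; nlinarith
  have hdenle : 1 - (ε * b) ^ 2 ≤ 2 * (ε * δ) := by rw [hden]; nlinarith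
  have hblow : 1 / (2 * ε) ≤ b := by
    have h2 : 1 / ε = 1 / (2 * ε) + 1 / (2 * ε) := by field_simp; ring
    simp only [hbdef]; linarith
  clear_value b
  have hfirst : χN < b / (1 - (ε * b) ^ 2) := by
    rw [lt_div_iff₀ hdenpos]
    have hstep : χN * (1 - (ε * b) ^ 2) ≤ χN * (2 * (ε * δ)) :=
      mul_le_mul_of_nonneg_left hdenle hN.le
    have hδ2' : χN * (2 * (ε * δ)) ≤ χN * (2 * (ε * (1 / (8 * ε ^ 2 * χN)))) := by
      gcongr
    have hval : χN * (2 * (ε * (1 / (8 * ε ^ 2 * χN)))) = 1 / (4 * ε) := by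
      field_simp; ring
    have hbig : 1 / (4 * ε) < b := by
      have : 1 / (4 * ε) < 1 / (2 * ε) := by
        rw [div_lt_div_iff₀ (by positivity) (by positivity)]; nlinarith
      linarith
    linarith
  have hsecond : 0 ≤ χS * b / Real.sqrt (4 * DS * α + b ^ 2) :=
    div_nonneg (mul_nonneg hS.le hbpos.le) (Real.sqrt_nonneg _)
  linarith

theorem stmt3 (χS χN DS α ε : ℝ) (hS : 0 < χS) (hN : 0 < χN) (hD : 0 < DS)
    (hα : 0 < α) (hε : 0 < ε) :
    ∃! σ : ℝ, σ ∈ Set.Ioo 0 (1 / ε) ∧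
      χN - σ / (1 - (ε * σ) ^ 2) - χS * σ / Real.sqrt (4 * DS * α + σ ^ 2) = 0 := by
  have hcpos : (0:ℝ) < 4 * DS * α := by positivity
  set g : ℝ → ℝ := fun σ => σ / (1 - (ε * σ) ^ 2) + χS * σ / Real.sqrt (4 * DS * α + σ ^ 2)
    with hg
  have hmono : ∀ a b : ℝ, 0 ≤ a → a < b → b < 1 / ε → g a < g b :=
    stmt3_mono χS DS α ε hS hD hα hε
  obtain ⟨b, hb0, hb1, hbval⟩ := stmt3_pt χS χN DS α ε hS hN hD hα hε
  have hbval : χN < g b := hbval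
  have hcont : ContinuousOn g (Set.Icc 0 b) := by
    apply ContinuousOn.add
    · apply ContinuousOn.div continuousOn_id (by fun_prop)
      intro x hx
      have h1 : 0 ≤ x := hx.1
      have h2 : x ≤ b := hx.2
      have hεx : x * ε < 1 := by
        have hbe : b * ε < 1 := (lt_div_iff₀ hε).mp hb1
        nlinarith [mul_le_mul_of_nonneg_right h2 hε.le]
      have : 0 < 1 - (ε * x) ^ 2 := by
        nlinarith [mul_pos (show (0:ℝ) < 1 - ε * x by nlinarith)
          (show (0:ℝ) < 1 + ε * x by nlinarith)]
      exact ne_of_gt this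
    · apply ContinuousOn.div (by fun_prop)
      · exact (Real.continuous_sqrt.comp (by continuity)).continuousOn
      · intro x hx
        exact ne_of_gt (Real.sqrt_pos.mpr (by positivity))
  have hg0 : g 0 = 0 := by simp [hg]
  have hivt := intermediate_value_Ioo (le_of_lt hb0) hcont
  have hmem : χN ∈ Set.Ioo (g 0) (g b) := by
    rw [hg0]; exact ⟨hN, hbval⟩
  obtain ⟨σ, hσmem, hσval⟩ := hivt hmem
  refine ⟨σ, ⟨⟨hσmem.1, lt_trans hσmem.2 hb1⟩, ?_⟩, ?_⟩
  · have : g σ = χN := hσval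
    simp only [hg] at this
    linarith
  · intro y ⟨⟨hy0, hy1⟩, hyval⟩
    have hgy : g y = χN := by simp only [hg]; linarith
    have hgσ : g σ = χN := hσval
    by_contra hne
    rcases lt_trichotomy y σ with h | h | h
    · have := hmono y σ hy0.le h (lt_trans hσmem.2 hb1)
      rw [hgy, hgσ] at this; exact lt_irrefl _ this
    · exact hne h
    · have := hmono σ y hσmem.1.le h hy1
      rw [hgy, hgσ] at this; exact lt_irrefl _ this
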